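/- Let $f_1, \ldots, f_n : \mathbb{R}^d \to \mathbb{R}$ each have $L$-Lipschitz gradients, let $\pi$ be a permutation of $\{1, \ldots, n\}$, let $\eta > 0$, and define iterates by $w_1 = w_0 - \eta v_0$ with $v_0 = \nabla P(w_0)$ where $P = \frac{1}{n}\sum_i f_i$, and $v_t = \frac{n+1}{n+1-t}(\nabla f_{\pi(t)}(w_t) - \nabla f_{\pi(t)}(w_{t-1})) + v_{t-1}$, $w_{t+1} = w_t - \eta v_t$, for $t = 1, \ldots, n$. If additionally $\|v_t\| \leq \|v_0\|$ for all $t$, then with $\Delta_n = \sum_{t=0}^n v_t$ one has $\left\|\nabla P(w_0) - \frac{\Delta_n}{n+1}\right\|^2 \leq \eta^2 n^2 L^2 \|\nabla P(w_0)\|^2$. -/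

import Mathlib

theorem adjusted_sarah_exact_deviation_bound {d : ℕ} (n : ℕ) (hn : 1 ≤ n)
    (L η : ℝ) (hL : 0 < L) (hη : 0 < η)
    (f : Fin n → EuclideanSpace ℝ (Fin d) → ℝ)
    (hdiff : ∀ i, Differentiable ℝ (f i))
    (hlip : ∀ i w w', ‖gradient (f i) w - gradient (f i) w'‖ ≤ L * ‖w - w'‖)
    (π : Equiv.Perm (Fin n))
    (P : EuclideanSpace ℝ (Fin d) → ℝ)
    (hP : P = fun w => (∑ i, f i w) / n)
    (v w : ℕ → EuclideanSpace ℝ (Fin d))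
    (hv0 : v 0 = gradient P (w 0))
    (hw1 : w 1 = w 0 - η • v 0)
    (hv : ∀ t (h1 : 1 ≤ t) (h2 : t ≤ n),
      v t = (((n : ℝ) + 1) / ((n : ℝ) + 1 - (t : ℝ))) •
          (gradient (f (π ⟨t - 1, by omega⟩)) (w t)
            - gradient (f (π ⟨t - 1, by omega⟩)) (w (t - 1)))
        + v (t - 1))
    (hw : ∀ t, 1 ≤ t → t ≤ n → w (t + 1) = w t - η • v t)
    (hnorm : ∀ t, t ≤ n → ‖v t‖ ≤ ‖v 0‖) :
    ‖gradient P (w 0) - ((n : ℝ) + 1)⁻¹ • ∑ t ∈ Finset.range (n + 1), v t‖ ^ 2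
      ≤ η ^ 2 * n ^ 2 * L ^ 2 * ‖gradient P (w 0)‖ ^ 2 := by
  set g : ℕ → EuclideanSpace ℝ (Fin d) := fun s =>
    if h : s < n then gradient (f (π ⟨s, h⟩)) (w (s+1)) - gradient (f (π ⟨s, h⟩)) (w s)
    else 0 with hg
  -- step relation
  have hstep : ∀ s, s < n → w (s + 1) - w s = -(η • v s) := by
    intro s hs
    rcases Nat.eq_zero_or_pos s with rfl | hs1
    · rw [hw1]; abel
    · rw [hw s hs1 (le_of_lt hs)]; abel
  have hgbound : ∀ s, s < n → ‖g s‖ ≤ η * L * ‖v 0‖ := by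
    intro s hs
    have : g s = gradient (f (π ⟨s, hs⟩)) (w (s+1)) - gradient (f (π ⟨s, hs⟩)) (w s) := by
      simp [hg, hs]
    rw [this]
    calc ‖gradient (f (π ⟨s, hs⟩)) (w (s+1)) - gradient (f (π ⟨s, hs⟩)) (w s)‖
        ≤ L * ‖w (s+1) - w s‖ := hlip _ _ _
      _ = L * (η * ‖v s‖) := by
          rw [hstep s hs, norm_neg, norm_smul, Real.norm_eq_abs, abs_of_pos hη]
      _ ≤ η * L * ‖v 0‖ := by
          have h' := mul_le_mul_of_nonneg_left (hnorm s (le_of_lt hs)) (mul_nonneg hL.le hη.le)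
          nlinarith [h']
  -- D relation
  have hD : ∀ s, s < n →
      ((n : ℝ) - s) • (v (s+1) - v s) = ((n : ℝ) + 1) • g s := by
    intro s hs
    have h1 : (1:ℕ) ≤ s + 1 := by omega
    have h2 : s + 1 ≤ n := hs
    have hvs := hv (s+1) h1 h2
    simp only [Nat.add_sub_cancel] at hvs
    have hgs : g s = gradient (f (π ⟨s, hs⟩)) (w (s+1)) - gradient (f (π ⟨s, hs⟩)) (w s) := by
      simp [hg, hs]
    have hDe : v (s+1) - v s = (((n : ℝ) + 1) / ((n : ℝ) + 1 - ((s:ℝ)+1))) • g s := by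
      rw [hgs]
      rw [hvs]
      push_cast
      abel
    rw [hDe, smul_smul]
    have hne : (n : ℝ) - s ≠ 0 := by
      have : (s:ℝ) < n := by exact_mod_cast hs
      linarith
    congr 1
    field_simp
    rw [show (n:ℝ) + 1 - ((s:ℝ) + 1) = (n:ℝ) - s by ring, div_self hne]
  -- sum identity
  have hS : ∀ N : ℕ, ∑ k ∈ Finset.range (N+1), v k
      = ((N:ℝ)+1) • v 0 + ∑ s ∈ Finset.range N, ((N:ℝ) - s) • (v (s+1) - v s) := by
    intro N
    induction N with
    | zero => simp
    | succ N ih =>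
      rw [Finset.sum_range_succ, ih]
      have htel : v (N+1) = v 0 + ∑ s ∈ Finset.range (N+1), (v (s+1) - v s) := by
        rw [Finset.sum_range_sub]; abel
      rw [htel]
      have hsplit : ∑ s ∈ Finset.range (N+1), (((N:ℝ)+1) - s) • (v (s+1) - v s)
          = ∑ s ∈ Finset.range (N+1), (((N:ℝ) - s) • (v (s+1) - v s) + (v (s+1) - v s)) := by
        refine Finset.sum_congr rfl fun s _ => ?_
        rw [show ((N:ℝ)+1 - s) = ((N:ℝ) - s) + 1 by ring, add_smul, one_smul]
      push_cast
      rw [hsplit, Finset.sum_add_distrib, Finset.sum_range_succ (fun s => ((N:ℝ) - s) • (v (s+1) - v s)),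
        sub_self, zero_smul, add_zero]
      push_cast
      module
  have hSn : ∑ k ∈ Finset.range (n+1), v k
      = ((n:ℝ)+1) • v 0 + ((n:ℝ)+1) • ∑ s ∈ Finset.range n, g s := by
    rw [hS n, Finset.smul_sum]
    congr 1
    exact Finset.sum_congr rfl fun s hs => hD s (Finset.mem_range.mp hs)
  have hne : ((n:ℝ) + 1) ≠ 0 := by positivity
  have hkey : gradient P (w 0) - ((n : ℝ) + 1)⁻¹ • ∑ t ∈ Finset.range (n + 1), v t
      = -∑ s ∈ Finset.range n, g s := by
    rw [← hv0, hSn, smul_add, smul_smul, smul_smul, inv_mul_cancel₀ hne, one_smul, one_smul]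
    abel
  rw [hkey, norm_neg]
  have h1 : ‖∑ s ∈ Finset.range n, g s‖ ≤ (n:ℝ) * (η * L * ‖v 0‖) := by
    calc ‖∑ s ∈ Finset.range n, g s‖ ≤ ∑ s ∈ Finset.range n, ‖g s‖ := norm_sum_le _ _
      _ ≤ ∑ s ∈ Finset.range n, (η * L * ‖v 0‖) :=
          Finset.sum_le_sum fun s hs => hgbound s (Finset.mem_range.mp hs)
      _ = (n:ℝ) * (η * L * ‖v 0‖) := by
          rw [Finset.sum_const, Finset.card_range, nsmul_eq_mul]
  have h2 : ‖∑ s ∈ Finset.range n, g s‖ ^ 2 ≤ ((n:ℝ) * (η * L * ‖v 0‖)) ^ 2 := by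
    have := norm_nonneg (∑ s ∈ Finset.range n, g s)
    nlinarith
  rw [← hv0]
  nlinarith [h2]
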